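/- Let x : ℤ → ℝ be a sequence with 1 ≤ x_i ≤ 2 for all i, let X_i := diag(j ↦ x(i+j)) for i ∈ ℤ, and let Σ ⊆ ℝ^ℤ be the closure, in the product topology, of the set of shifts {(j ↦ x(i+j)) : i ∈ ℤ} (a compact space, being a closed subset of [1,2]^ℤ). Then there is a unital star-algebra isomorphism Φ from the C*-algebra C(Σ, ℂ) of continuous complex-valued functions on Σ onto C*({X_i : i ∈ ℤ}) such that for every i ∈ ℤ, Φ sends the i-th coordinate evaluation function (s ↦ s(i)) to X_i. -/

import Mathlib

/-- The Hilbert space ℓ²(ℤ) of square-summable complex sequences. -/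
noncomputable abbrev H : Type := lp (fun _ : ℤ => ℂ) 2

/-- `C*(S)`: the smallest closed unital star-subalgebra of the bounded operators on ℓ²(ℤ)
containing `S`. -/
noncomputable def Cstar (S : Set (H →L[ℂ] H)) : StarSubalgebra ℂ (H →L[ℂ] H) :=
  (StarAlgebra.adjoin ℂ S).topologicalClosure

/-- The closure in `ℝ^ℤ` (product topology) of the set of shifts of `x`. -/
noncomputable def shiftHull (x : ℤ → ℝ) : Set (ℤ → ℝ) :=
  closure (Set.range fun i : ℤ => fun j : ℤ => x (i + j))

/-- The `i`-th coordinate evaluation, as a continuous complex-valued function on the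
shift hull of `x`. -/
noncomputable def coordFn (x : ℤ → ℝ) (i : ℤ) : C(shiftHull x, ℂ) :=
  ⟨fun s => ((s : ℤ → ℝ) i : ℂ),
    Complex.continuous_ofReal.comp ((continuous_apply i).comp continuous_subtype_val)⟩


namespace DiagAux

open scoped ComplexConjugate ENNReal

lemma hp2 : (0:ℝ) < (2:ℝ≥0∞).toReal := by norm_num

lemma memℓp_two_mul (a : lp (fun _ : ℤ => ℂ) ∞) (f : H) :
    Memℓp (fun j => a j * f j) 2 := by
  apply memℓp_gen
  refine Summable.of_nonneg_of_le (fun j => by positivity)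
    (fun j => ?_) (((lp.memℓp f).summable hp2).mul_left (‖a‖ ^ (2:ℝ≥0∞).toReal))
  calc ‖a j * f j‖ ^ (2:ℝ≥0∞).toReal ≤ (‖a‖ * ‖f j‖) ^ (2:ℝ≥0∞).toReal := by
        apply Real.rpow_le_rpow (norm_nonneg _) ?_ hp2.le
        rw [norm_mul]
        exact mul_le_mul_of_nonneg_right (lp.norm_apply_le_norm ENNReal.top_ne_zero a j)
          (norm_nonneg _)
    _ = ‖a‖ ^ (2:ℝ≥0∞).toReal * ‖f j‖ ^ (2:ℝ≥0∞).toReal :=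
        Real.mul_rpow (norm_nonneg _) (norm_nonneg _)

/-- pointwise domination implies norm comparison in ℓ². -/
lemma lp2_norm_le_of (g f : H) {r : ℝ} (hr : 0 ≤ r) (h : ∀ j, ‖g j‖ ≤ r * ‖f j‖) :
    ‖g‖ ≤ r * ‖f‖ := by
  rw [lp.norm_eq_tsum_rpow hp2 g, lp.norm_eq_tsum_rpow hp2 f]
  have h1 : ∑' j, ‖g j‖ ^ (2:ℝ≥0∞).toReal
      ≤ r ^ (2:ℝ≥0∞).toReal * ∑' j, ‖f j‖ ^ (2:ℝ≥0∞).toReal := by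
    rw [← tsum_mul_left]
    refine Summable.tsum_le_tsum (fun j => ?_) ((lp.memℓp g).summable hp2)
      (((lp.memℓp f).summable hp2).mul_left _)
    rw [← Real.mul_rpow hr (norm_nonneg _)]
    exact Real.rpow_le_rpow (norm_nonneg _) (h j) hp2.le
  calc (∑' j, ‖g j‖ ^ (2:ℝ≥0∞).toReal) ^ (1 / (2:ℝ≥0∞).toReal)
      ≤ (r ^ (2:ℝ≥0∞).toReal * ∑' j, ‖f j‖ ^ (2:ℝ≥0∞).toReal) ^ (1 / (2:ℝ≥0∞).toReal) := by
        apply Real.rpow_le_rpow (tsum_nonneg (fun j => by positivity)) h1 (by positivity)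
    _ = r * (∑' j, ‖f j‖ ^ (2:ℝ≥0∞).toReal) ^ (1 / (2:ℝ≥0∞).toReal) := by
        rw [Real.mul_rpow (by positivity) (tsum_nonneg (fun j => by positivity)),
          ← Real.rpow_mul hr]
        norm_num [ENNReal.toReal_ofNat]

/-- The diagonal operator on ℓ²(ℤ) given by a bounded sequence. -/
noncomputable def diag (a : lp (fun _ : ℤ => ℂ) ∞) : H →L[ℂ] H :=
  LinearMap.mkContinuous
    { toFun := fun f => ⟨fun j => a j * f j, memℓp_two_mul a f⟩
      map_add' := fun f g => lp.ext (funext fun j => by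
        simp [lp.coeFn_add, mul_add]; rfl)
      map_smul' := fun c f => lp.ext (funext fun j => by
        simp [lp.coeFn_smul, mul_left_comm, mul_comm]) }
    ‖a‖ (fun f => lp2_norm_le_of _ f (norm_nonneg a) (fun j => by
      show ‖a j * f j‖ ≤ _
      rw [norm_mul]
      exact mul_le_mul_of_nonneg_right (lp.norm_apply_le_norm ENNReal.top_ne_zero a j)
        (norm_nonneg _)))

@[simp] lemma diag_apply (a : lp (fun _ : ℤ => ℂ) ∞) (f : H) (j : ℤ) :
    (diag a f) j = a j * f j := rfl

lemma diag_norm_le (a : lp (fun _ : ℤ => ℂ) ∞) : ‖diag a‖ ≤ ‖a‖ :=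
  LinearMap.mkContinuous_norm_le _ (norm_nonneg a) _

lemma norm_apply_le_norm_diag (a : lp (fun _ : ℤ => ℂ) ∞) (j : ℤ) :
    ‖a j‖ ≤ ‖diag a‖ := by
  have hsingle : ‖(lp.single 2 j (1:ℂ) : H)‖ = 1 := by
    simpa using lp.norm_single hp2 (fun _ : ℤ => (1:ℂ)) j
  have key : diag a (lp.single 2 j (1:ℂ)) = a j • lp.single 2 j (1:ℂ) := by
    apply lp.ext
    funext k
    rw [lp.coeFn_smul]
    by_cases hk : k = j
    · subst hk
      simp [lp.single_apply_self]
    · simp [lp.single_apply_ne 2 j _ hk, Pi.single_apply, hk]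
  calc ‖a j‖ = ‖a j • (lp.single 2 j (1:ℂ) : H)‖ := by rw [norm_smul, hsingle, mul_one]
    _ = ‖diag a (lp.single 2 j (1:ℂ))‖ := by rw [key]
    _ ≤ ‖diag a‖ * ‖(lp.single 2 j (1:ℂ) : H)‖ := (diag a).le_opNorm _
    _ = ‖diag a‖ := by rw [hsingle, mul_one]

lemma diag_one : diag 1 = (1 : H →L[ℂ] H) := by
  ext f j
  show (1 : lp (fun _ : ℤ => ℂ) ∞) j * f j = f j
  rw [lp.infty_coeFn_one]
  simp

lemma diag_mul (a b : lp (fun _ : ℤ => ℂ) ∞) : diag (a * b) = diag a * diag b := by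
  ext f j
  show (a * b) j * f j = a j * (b j * f j)
  rw [lp.infty_coeFn_mul]
  show a j * b j * f j = _
  ring

lemma diag_add (a b : lp (fun _ : ℤ => ℂ) ∞) : diag (a + b) = diag a + diag b := by
  ext f j
  show (a + b) j * f j = a j * f j + b j * f j
  rw [lp.coeFn_add]
  show (a j + b j) * f j = _
  ring

lemma diag_smul (c : ℂ) (a : lp (fun _ : ℤ => ℂ) ∞) : diag (c • a) = c • diag a := by
  ext f j
  show (c • a) j * f j = c • (a j * f j)
  rw [lp.coeFn_smul]
  show (c * a j) * f j = c * (a j * f j)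
  ring

lemma diag_star (a : lp (fun _ : ℤ => ℂ) ∞) : diag (star a) = star (diag a) := by
  rw [ContinuousLinearMap.star_eq_adjoint, ContinuousLinearMap.eq_adjoint_iff]
  intro f g
  rw [lp.inner_eq_tsum, lp.inner_eq_tsum]
  apply tsum_congr
  intro j
  rw [RCLike.inner_apply, RCLike.inner_apply, diag_apply, diag_apply]
  have h1 : (star a) j = (starRingEnd ℂ) (a j) := by rw [lp.coeFn_star]; rfl
  rw [h1, map_mul, Complex.conj_conj]
  ring

/-- Diagonal operators as a star algebra homomorphism. -/
noncomputable def diagSA : lp (fun _ : ℤ => ℂ) ∞ →⋆ₐ[ℂ] (H →L[ℂ] H) where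
  toFun := diag
  map_one' := diag_one
  map_mul' := diag_mul
  map_zero' := by
    show diag 0 = 0
    have h0 : (0 : lp (fun _ : ℤ => ℂ) ∞) = (0:ℂ) • 0 := by simp
    rw [h0, diag_smul]; simp
  map_add' := diag_add
  commutes' := fun c => by
    show diag (algebraMap ℂ _ c) = algebraMap ℂ (H →L[ℂ] H) c
    rw [Algebra.algebraMap_eq_smul_one, Algebra.algebraMap_eq_smul_one, diag_smul, diag_one]
  map_star' := fun a => show diag (star a) = star (diag a) from diag_star a

@[simp] lemma diagSA_apply (a : lp (fun _ : ℤ => ℂ) ∞) : diagSA a = diag a := rfl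


variable {Y : Type*} [TopologicalSpace Y] [CompactSpace Y]

/-- The bounded sequence of values of a continuous function along a sequence of points. -/
noncomputable def seqOf (p : ℤ → Y) (f : C(Y, ℂ)) : lp (fun _ : ℤ => ℂ) ∞ :=
  ⟨fun j => f (p j), memℓp_infty ⟨‖f‖, by rintro r ⟨j, rfl⟩; exact f.norm_coe_le_norm _⟩⟩

@[simp] lemma seqOf_apply (p : ℤ → Y) (f : C(Y, ℂ)) (j : ℤ) : (seqOf p f) j = f (p j) := rfl

/-- `seqOf` as a star algebra homomorphism. -/
noncomputable def seqSA (p : ℤ → Y) : C(Y, ℂ) →⋆ₐ[ℂ] lp (fun _ : ℤ => ℂ) ∞ where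
  toFun := seqOf p
  map_one' := rfl
  map_mul' := fun f g => rfl
  map_zero' := rfl
  map_add' := fun f g => rfl
  commutes' := fun c => rfl
  map_star' := fun f => rfl

@[simp] lemma seqSA_apply (p : ℤ → Y) (f : C(Y, ℂ)) : seqSA p f = seqOf p f := rfl


end DiagAux


set_option maxHeartbeats 1000000 in
set_option synthInstance.maxHeartbeats 400000 in
open scoped ENNReal in
/-- For weights `1 ≤ x i ≤ 2` and diagonal operators `X i = diag (j ↦ x (i+j))`,
there is a unital star-algebra isomorphism of `C(Σ, ℂ)` (where `Σ` is the closure of the set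
of shifts of `x` in the product topology) onto `C*({X i : i ∈ ℤ})` sending the `i`-th
coordinate evaluation to `X i`. -/
theorem continuousFunctions_shiftHull_iso_cstar_diagonals
    (x : ℤ → ℝ) (hx : ∀ i, 1 ≤ x i ∧ x i ≤ 2)
    (X : ℤ → H →L[ℂ] H)
    (hX : ∀ (i : ℤ) (f : H) (j : ℤ), X i f j = (x (i + j) : ℂ) * f j) :
    ∃ Φ : C(shiftHull x, ℂ) ≃⋆ₐ[ℂ] Cstar (Set.range X),
      ∀ i : ℤ, (Φ (coordFn x i) : H →L[ℂ] H) = X i := by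
  classical
  -- the shift hull is compact
  have hcomp : IsCompact (shiftHull x) := by
    have h1 : IsCompact (Set.pi Set.univ fun _ : ℤ => Set.Icc (1:ℝ) 2) :=
      isCompact_univ_pi fun _ => isCompact_Icc
    refine h1.of_isClosed_subset isClosed_closure
      (closure_minimal ?_ (isClosed_set_pi fun _ _ => isClosed_Icc))
    rintro _ ⟨i, rfl⟩ j _
    exact ⟨(hx (i+j)).1, (hx (i+j)).2⟩
  haveI : CompactSpace (shiftHull x) := isCompact_iff_compactSpace.mp hcomp
  -- the shift points
  let pt : ℤ → shiftHull x := fun i => ⟨fun j => x (i + j), subset_closure ⟨i, rfl⟩⟩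
  let aMap : C(shiftHull x, ℂ) → lp (fun _ : ℤ => ℂ) ∞ := DiagAux.seqOf pt
  have aMap_apply : ∀ (f : C(shiftHull x, ℂ)) (j : ℤ), (aMap f) j = f (pt j) := fun f j => rfl
  let Φ₀ : C(shiftHull x, ℂ) →⋆ₐ[ℂ] (H →L[ℂ] H) := DiagAux.diagSA.comp (DiagAux.seqSA pt)
  have hΦ₀ : ∀ f, Φ₀ f = DiagAux.diag (aMap f) := fun f => rfl
  -- it sends coordinate functions to the operators X i
  have hXeq : ∀ i, Φ₀ (coordFn x i) = X i := by
    intro i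
    ext f j
    show (aMap (coordFn x i)) j * f j = X i f j
    rw [hX i f j, aMap_apply]
    show ((x (j + i) : ℝ) : ℂ) * f j = ((x (i + j) : ℝ) : ℂ) * f j
    rw [add_comm]
  -- it is isometric
  have hiso : ∀ f, ‖Φ₀ f‖ = ‖f‖ := by
    intro f
    refine le_antisymm ((DiagAux.diag_norm_le (aMap f)).trans
      (lp.norm_le_of_forall_le (norm_nonneg f) (fun j => f.norm_coe_le_norm (pt j)))) ?_
    rw [ContinuousMap.norm_le f (norm_nonneg _)]
    intro s
    have hmem : s ∈ closure (Set.range pt) := by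
      rw [closure_subtype]
      have himg : ((fun t : shiftHull x => (t : ℤ → ℝ)) '' Set.range pt)
          = Set.range fun i : ℤ => fun j : ℤ => x (i + j) := by
        rw [← Set.range_comp]; rfl
      rw [himg]
      exact s.2
    have hcl : closure (Set.range pt) ⊆ {t : shiftHull x | ‖f t‖ ≤ ‖Φ₀ f‖} := by
      refine closure_minimal ?_ (isClosed_le (map_continuous f).norm continuous_const)
      rintro _ ⟨j, rfl⟩
      have h1 := DiagAux.norm_apply_le_norm_diag (aMap f) j
      rw [aMap_apply] at h1
      exact le_of_le_of_eq h1 (congrArg norm (hΦ₀ f)).symm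
    exact hcl hmem
  have hiso' : Isometry Φ₀ := AddMonoidHomClass.isometry_of_norm Φ₀ hiso
  have hinj : Function.Injective Φ₀ := by
    intro f g hfg
    have h := hiso (f - g)
    rw [map_sub, hfg, sub_self, norm_zero] at h
    exact sub_eq_zero.mp (norm_eq_zero.mp h.symm)
  -- the range of Φ₀ is contained in Cstar (range X), by Stone–Weierstrass
  have hmemC : ∀ f, Φ₀ f ∈ Cstar (Set.range X) := by
    intro f
    set A := StarAlgebra.adjoin ℂ (Set.range (coordFn x)) with hA
    have hsep : A.SeparatesPoints := by
      intro s t hst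
      have hex : ∃ i, (s : ℤ → ℝ) i ≠ (t : ℤ → ℝ) i := by
        by_contra hcon
        push_neg at hcon
        exact hst (Subtype.ext (funext hcon))
      obtain ⟨i, hi⟩ := hex
      refine ⟨coordFn x i, ⟨coordFn x i, StarAlgebra.subset_adjoin ℂ _ ⟨i, rfl⟩, rfl⟩, ?_⟩
      intro hc
      exact hi (Complex.ofReal_inj.mp hc)
    have htop : A.topologicalClosure = ⊤ :=
      ContinuousMap.starSubalgebra_topologicalClosure_eq_top_of_separatesPoints A hsep
    have hfmem : f ∈ closure (A : Set C(shiftHull x, ℂ)) := by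
      have h1 : f ∈ A.topologicalClosure := by rw [htop]; trivial
      rwa [← SetLike.mem_coe, StarSubalgebra.topologicalClosure_coe] at h1
    have himg : Φ₀ f ∈ closure (Φ₀ '' (A : Set C(shiftHull x, ℂ))) :=
      image_closure_subset_closure_image hiso'.continuous ⟨f, hfmem, rfl⟩
    have hmap : A.map Φ₀ = StarAlgebra.adjoin ℂ (Set.range X) := by
      rw [hA, StarAlgHom.map_adjoin]
      congr 1
      rw [← Set.range_comp]
      exact congrArg _ (funext hXeq)
    have heq : Φ₀ '' (A : Set C(shiftHull x, ℂ))
        = ((StarAlgebra.adjoin ℂ (Set.range X) : StarSubalgebra ℂ (H →L[ℂ] H))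
            : Set (H →L[ℂ] H)) := by
      rw [← hmap]; rfl
    rw [heq] at himg
    show Φ₀ f ∈ Cstar (Set.range X)
    rw [← SetLike.mem_coe]
    exact himg
  -- and conversely Cstar (range X) is contained in the range of Φ₀
  have hclosedrange : IsClosed (Set.range Φ₀) := hiso'.isClosedEmbedding.isClosed_range
  have hsub2 : (Cstar (Set.range X) : Set (H →L[ℂ] H)) ⊆ Set.range Φ₀ := by
    show (((StarAlgebra.adjoin ℂ (Set.range X)).topologicalClosure : StarSubalgebra ℂ _)
        : Set (H →L[ℂ] H)) ⊆ _
    rw [StarSubalgebra.topologicalClosure_coe]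
    refine closure_minimal ?_ hclosedrange
    have hle : StarAlgebra.adjoin ℂ (Set.range X) ≤ Φ₀.range := by
      apply StarAlgebra.adjoin_le
      rintro _ ⟨i, rfl⟩
      exact ⟨coordFn x i, hXeq i⟩
    intro y hy
    exact hle hy
  -- assemble the isomorphism
  let Ψ : C(shiftHull x, ℂ) →⋆ₐ[ℂ] Cstar (Set.range X) :=
    Φ₀.codRestrict (Cstar (Set.range X)) hmemC
  have hbij : Function.Bijective Ψ := by
    constructor
    · exact (StarAlgHom.injective_codRestrict Φ₀ _ hmemC).mpr hinj
    · rintro ⟨y, hy⟩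
      obtain ⟨f, hf⟩ := hsub2 hy
      exact ⟨f, Subtype.ext hf⟩
  refine ⟨StarAlgEquiv.ofBijective Ψ hbij, fun i => ?_⟩
  have h1 : (StarAlgEquiv.ofBijective Ψ hbij) (coordFn x i) = Ψ (coordFn x i) :=
    StarAlgEquiv.ofBijective_apply hbij (coordFn x i)
  rw [h1]
  show Φ₀ (coordFn x i) = X i
  exact hXeq i
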